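/- Let a ∈ (ℤ/2ⁿℤ)^{2ν+δ} with a·G·aᵗ = 0 and with a_j a unit for some j ∈ {1,…,2ν}. Then the number of equivalence classes [a + m], with m ranging over (2·ℤ/2ⁿℤ)^{2ν+δ} such that (a+m)·G·(a+m)ᵗ = 0, equals 2^{(n-1)(2ν+δ-2)}, where [·] denotes the class under scaling by units of ℤ/2ⁿℤ. -/

import Mathlib

namespace Ortho
open Matrix

abbrev Vec (n ν δ : ℕ) := Fin (2*ν+δ) → ZMod (2^n)

/-- The orthogonal form matrix `G_{2ν+δ,Δ}`. -/
def Gmat (n ν δ : ℕ) (z : ZMod (2^n)) : Matrix (Fin (2*ν+δ)) (Fin (2*ν+δ)) (ZMod (2^n)) :=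
  Matrix.of fun i j =>
    if i.val < ν ∧ j.val = i.val + ν then 1
    else if 2*ν ≤ i.val ∧ i.val = j.val then (if δ = 2 then z else 1)
    else if i.val = 2*ν ∧ j.val = 2*ν+1 then 1
    else 0

/-- Representatives of vertices: vectors with a unit coordinate that are isotropic. -/
abbrev VertexRep (n ν δ : ℕ) (z : ZMod (2^n)) :=
  {a : Vec n ν δ // (∃ i, IsUnit (a i)) ∧ a ⬝ᵥ (Gmat n ν δ z).mulVec a = 0}

instance vsetoid (n ν δ : ℕ) (z : ZMod (2^n)) : Setoid (VertexRep n ν δ z) where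
  r a b := ∃ u : (ZMod (2^n))ˣ, (a : Vec n ν δ) = (u : ZMod (2^n)) • (b : Vec n ν δ)
  iseqv := by
    constructor
    · intro a; exact ⟨1, by simp⟩
    · rintro a b ⟨u, h⟩
      exact ⟨u⁻¹, by rw [h, smul_smul, Units.inv_mul, one_smul]⟩
    · rintro a b c ⟨u, h1⟩ ⟨v, h2⟩
      exact ⟨u * v, by rw [h1, h2, smul_smul, Units.val_mul]⟩

/-- Vertices of the orthogonal graph: classes of vectors under unit scaling. -/
def Vertex (n ν δ : ℕ) (z : ZMod (2^n)) := Quotient (vsetoid n ν δ z)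

def adjAux (n ν δ : ℕ) (z : ZMod (2^n)) (A B : Vertex n ν δ z) : Prop :=
  ∃ a b : VertexRep n ν δ z, (⟦a⟧ : Vertex n ν δ z) = A ∧ (⟦b⟧ : Vertex n ν δ z) = B ∧
    IsUnit ((a : Vec n ν δ) ⬝ᵥ (Gmat n ν δ z + (Gmat n ν δ z)ᵀ).mulVec (b : Vec n ν δ))

/-- The orthogonal graph modulo `2^n`. -/
def OGraph (n ν δ : ℕ) (z : ZMod (2^n)) : SimpleGraph (Vertex n ν δ z) where
  Adj A B := A ≠ B ∧ (adjAux n ν δ z A B ∨ adjAux n ν δ z B A)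
  symm := ⟨by rintro A B ⟨h1, h2⟩; exact ⟨Ne.symm h1, Or.symm h2⟩⟩
  loopless := ⟨by rintro A ⟨h, -⟩; exact h rfl⟩

end Ortho


namespace Ortho
open Matrix

section Aux


lemma isUnit_iff_val_odd {n : ℕ} (hn : 0 < n) (x : ZMod (2^n)) :
    IsUnit x ↔ x.val % 2 = 1 := by
  haveI : NeZero (2^n) := ⟨pow_ne_zero _ two_ne_zero⟩
  rw [← Nat.odd_iff, ← Nat.coprime_two_right,
    ← Nat.coprime_pow_right_iff hn x.val 2, ← ZMod.isUnit_iff_coprime,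
    ZMod.natCast_rightInverse x]

lemma val_two_mul_even {n : ℕ} (hn : 0 < n) (y : ZMod (2^n)) : (2 * y).val % 2 = 0 := by
  haveI : NeZero (2^n) := ⟨pow_ne_zero _ two_ne_zero⟩
  have : (2 * y : ZMod (2^n)) = ((2 * y.val : ℕ) : ZMod (2^n)) := by
    push_cast [ZMod.natCast_rightInverse y]; ring
  rw [this, ZMod.val_natCast, Nat.mod_mod_of_dvd _ (dvd_pow_self 2 hn.ne'), Nat.mul_mod_right]

lemma isUnit_add_two_mul {n : ℕ} (hn : 0 < n) (x y : ZMod (2^n)) (hx : IsUnit x) :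
    IsUnit (x + 2*y) := by
  haveI : NeZero (2^n) := ⟨pow_ne_zero _ two_ne_zero⟩
  rw [isUnit_iff_val_odd hn] at hx ⊢
  rw [ZMod.val_add, Nat.mod_mod_of_dvd _ (dvd_pow_self 2 hn.ne'), Nat.add_mod,
    val_two_mul_even hn, Nat.add_zero, Nat.mod_mod, hx]

lemma unit_eq_one_add {n : ℕ} (hn : 0 < n) (u : ZMod (2^n)) (hu : IsUnit u) :
    ∃ w, u = 1 + 2*w := by
  haveI : NeZero (2^n) := ⟨pow_ne_zero _ two_ne_zero⟩
  rw [isUnit_iff_val_odd hn] at hu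
  refine ⟨((u.val / 2 : ℕ) : ZMod (2^n)), ?_⟩
  have h2 : u.val = 2*(u.val/2) + 1 := by omega
  calc u = ((u.val : ℕ) : ZMod (2^n)) := (ZMod.natCast_rightInverse u).symm
    _ = ((2*(u.val/2) + 1 : ℕ) : ZMod (2^n)) := by rw [← h2]
    _ = 1 + 2*((u.val / 2 : ℕ) : ZMod (2^n)) := by push_cast; ring

lemma card_coset {n : ℕ} (hn : 0 < n) (c : ZMod (2^n)) :
    Nat.card {x : ZMod (2^n) // ∃ y, x = c + 2*y} = 2^(n-1) := by
  haveI : NeZero (2^n) := ⟨pow_ne_zero _ two_ne_zero⟩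
  haveI : NeZero (2^(n-1)) := ⟨pow_ne_zero _ two_ne_zero⟩
  have hpow : (2:ℕ)^n = 2 * 2^(n-1) := by
    conv_lhs => rw [show n = (n-1)+1 by omega]
    ring
  let f : ZMod (2^(n-1)) → {x : ZMod (2^n) // ∃ y, x = c + 2*y} :=
    fun y => ⟨c + 2*((y.val : ℕ) : ZMod (2^n)), ((y.val : ℕ) : ZMod (2^n)), rfl⟩
  have hinj : Function.Injective f := by
    intro y₁ y₂ h
    have h1 : ((2*y₁.val : ℕ) : ZMod (2^n)) = ((2*y₂.val : ℕ) : ZMod (2^n)) := by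
      have := congrArg Subtype.val h
      simp only [f] at this
      push_cast
      linear_combination this
    rw [ZMod.natCast_eq_natCast_iff] at h1
    rw [hpow] at h1
    have h2 : y₁.val % 2^(n-1) = y₂.val % 2^(n-1) := by
      have e1 := Nat.mul_mod_mul_left 2 y₁.val (2^(n-1))
      have e2 := Nat.mul_mod_mul_left 2 y₂.val (2^(n-1))
      unfold Nat.ModEq at h1
      omega
    rw [Nat.mod_eq_of_lt (ZMod.val_lt y₁), Nat.mod_eq_of_lt (ZMod.val_lt y₂)] at h2
    exact ZMod.val_injective _ h2
  have hsurj : Function.Surjective f := by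
    rintro ⟨x, y, rfl⟩
    refine ⟨((y.val : ℕ) : ZMod (2^(n-1))), ?_⟩
    apply Subtype.ext
    show c + 2*((((y.val : ℕ) : ZMod (2^(n-1))).val : ℕ) : ZMod (2^n)) = c + 2*y
    rw [ZMod.val_natCast]
    congr 1
    have h3 : ((2*(y.val % 2^(n-1)) : ℕ) : ZMod (2^n)) = ((2*y.val : ℕ) : ZMod (2^n)) := by
      rw [ZMod.natCast_eq_natCast_iff]
      have h5 := Nat.ModEq.mul_left' (c := 2) (Nat.mod_modEq y.val (2^(n-1)))
      rwa [← hpow] at h5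
    have h4 : ((y.val : ℕ) : ZMod (2^n)) = y := ZMod.natCast_rightInverse y
    push_cast at h3
    rw [h4] at h3
    linear_combination h3
  rw [Nat.card_congr (Equiv.ofBijective f ⟨hinj, hsurj⟩).symm, Nat.card_zmod]

variable {n ν δ : ℕ} {z : ZMod (2^n)}

lemma Gmat_row (j k : Fin (2*ν+δ)) (hj : j.val < 2*ν)
    (hk : (j.val < ν ∧ k.val = j.val + ν) ∨ (ν ≤ j.val ∧ k.val + ν = j.val)) :
    ∀ i, Gmat n ν δ z i k + Gmat n ν δ z k i = if i = j then 1 else 0 := by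
  intro i
  rcases eq_or_ne i j with rfl | hij
  · rw [if_pos rfl]
    simp only [Gmat, Matrix.of_apply]
    split_ifs <;> first | (exfalso; omega) | norm_num
  · rw [if_neg hij]
    have hv : i.val ≠ j.val := fun h => hij (Fin.ext h)
    simp only [Gmat, Matrix.of_apply]
    split_ifs <;> first | (exfalso; omega) | norm_num

lemma Gmat_diag (k : Fin (2*ν+δ)) (hk : k.val < 2*ν) (hν : 0 < ν) :
    Gmat n ν δ z k k = 0 := by
  simp only [Gmat, Matrix.of_apply]
  split_ifs <;> first | (exfalso; omega) | norm_num

lemma Qdiff (hν : 0 < ν) (j k : Fin (2*ν+δ)) (hj : j.val < 2*ν)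
    (hk : (j.val < ν ∧ k.val = j.val + ν) ∨ (ν ≤ j.val ∧ k.val + ν = j.val))
    (c : Vec n ν δ) (t : ZMod (2^n)) :
    (Function.update c k t) ⬝ᵥ (Gmat n ν δ z).mulVec (Function.update c k t) =
      c ⬝ᵥ (Gmat n ν δ z).mulVec c + (c j) * (t - c k) := by
  have hupd : Function.update c k t = c + (t - c k) • (Pi.single k 1 : Fin (2*ν+δ) → ZMod (2^n)) := by
    funext i
    rcases eq_or_ne i k with rfl | h
    · simp
    · simp [Function.update_of_ne h, Pi.single_eq_of_ne h]
  rw [hupd]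
  set s := t - c k with hs
  simp only [Matrix.mulVec_add, Matrix.mulVec_smul, dotProduct_add, add_dotProduct,
    dotProduct_smul, smul_dotProduct, Matrix.mulVec_single, smul_eq_mul]
  have h1 : (c ⬝ᵥ fun i => Gmat n ν δ z i k * 1) = ∑ i, c i * Gmat n ν δ z i k := by
    simp [dotProduct, mul_one]
  have h2 : (Pi.single k (1:ZMod (2^n))) ⬝ᵥ (Gmat n ν δ z).mulVec c =
      ∑ i, Gmat n ν δ z k i * c i := by
    rw [single_dotProduct, one_mul, Matrix.mulVec]
    rfl
  have h3 : (Pi.single k (1:ZMod (2^n))) ⬝ᵥ (fun i => Gmat n ν δ z i k * 1) = 0 := by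
    rw [single_dotProduct, one_mul, mul_one, Gmat_diag k (by omega) hν]
  have hrow : ∑ i, c i * Gmat n ν δ z i k + ∑ i, Gmat n ν δ z k i * c i = c j := by
    rw [← Finset.sum_add_distrib]
    have : ∀ i, c i * Gmat n ν δ z i k + Gmat n ν δ z k i * c i =
        (if i = j then 1 else 0) * c i := by
      intro i
      rw [← Gmat_row j k hj hk i]
      ring
    rw [Finset.sum_congr rfl (fun i _ => this i)]
    simp [Finset.sum_ite_eq']
  have hcol : (Gmat n ν δ z).col k = fun i => Gmat n ν δ z i k * 1 := by
    funext i; rw [mul_one]; rfl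
  simp only [MulOpposite.op_one, one_smul, hcol]
  rw [h1, h2, h3]
  ring_nf
  linear_combination (s * hrow)

lemma Qcong (x m : Vec n ν δ) :
    (x + (2:ZMod (2^n)) • m) ⬝ᵥ (Gmat n ν δ z).mulVec (x + (2:ZMod (2^n)) • m) =
      x ⬝ᵥ (Gmat n ν δ z).mulVec x +
      2 * (m ⬝ᵥ (Gmat n ν δ z).mulVec x + x ⬝ᵥ (Gmat n ν δ z).mulVec m
        + 2 * (m ⬝ᵥ (Gmat n ν δ z).mulVec m)) := by
  simp only [Matrix.mulVec_add, Matrix.mulVec_smul, dotProduct_add, add_dotProduct,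
    dotProduct_smul, smul_dotProduct, smul_eq_mul]
  ring


end Aux

theorem card_lifts (n ν δ : ℕ) (hn : 0 < n) (hν : 0 < ν) (hδ : δ ≤ 2)
    (z : ZMod (2^n)) (hz : IsUnit z) (a : VertexRep n ν δ z)
    (ha : ∃ j : Fin (2*ν+δ), j.val < 2*ν ∧ IsUnit ((a : Vec n ν δ) j)) :
    Nat.card {B : Vertex n ν δ z // ∃ b : VertexRep n ν δ z,
        (⟦b⟧ : Vertex n ν δ z) = B ∧
        ∀ i, ∃ y, (b : Vec n ν δ) i = (a : Vec n ν δ) i + 2*y} =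
      2^((n-1)*(2*ν+δ-2)) := by
  classical
  haveI : NeZero (2^n) := ⟨pow_ne_zero _ two_ne_zero⟩
  obtain ⟨j, hj, hja⟩ := ha
  have hjlt : (j:ℕ) < 2*ν+δ := j.2
  let k : Fin (2*ν+δ) := ⟨if (j:ℕ) < ν then (j:ℕ) + ν else (j:ℕ) - ν, by split_ifs <;> omega⟩
  have hkval : (k:ℕ) = if (j:ℕ) < ν then (j:ℕ)+ν else (j:ℕ)-ν := rfl
  have hk : ((j:ℕ) < ν ∧ (k:ℕ) = (j:ℕ) + ν) ∨ (ν ≤ (j:ℕ) ∧ (k:ℕ) + ν = (j:ℕ)) := by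
    rcases Nat.lt_or_ge (j:ℕ) ν with h | h
    · exact Or.inl ⟨h, by rw [hkval, if_pos h]⟩
    · refine Or.inr ⟨h, ?_⟩
      rw [hkval, if_neg (by omega)]
      omega
  have hjk : j ≠ k := by
    intro h
    have hv := congrArg Fin.val h
    omega
  have hQa : (a : Vec n ν δ) ⬝ᵥ (Gmat n ν δ z).mulVec (a : Vec n ν δ) = 0 := a.2.2
  have hcong_unit : ∀ b : Vec n ν δ, (∀ i, ∃ y, b i = (a : Vec n ν δ) i + 2*y) →
      IsUnit (b j) := by
    intro b hb
    obtain ⟨y, hy⟩ := hb j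
    rw [hy]
    exact isUnit_add_two_mul hn _ _ hja
  let T := {b : Vec n ν δ // b ⬝ᵥ (Gmat n ν δ z).mulVec b = 0 ∧
      ∀ i, ∃ y, b i = (a : Vec n ν δ) i + 2*y}
  let S := {B : Vertex n ν δ z // ∃ b : VertexRep n ν δ z,
      (⟦b⟧ : Vertex n ν δ z) = B ∧
      ∀ i, ∃ y, (b : Vec n ν δ) i = (a : Vec n ν δ) i + 2*y}
  show Nat.card S = 2^((n-1)*(2*ν+δ-2))
  -- representatives
  let rep : S → VertexRep n ν δ z := fun B => B.2.choose
  have hrep1 : ∀ B : S, (⟦rep B⟧ : Vertex n ν δ z) = B.1 := fun B => B.2.choose_spec.1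
  have hrep2 : ∀ B : S, ∀ i, ∃ y, (rep B : Vec n ν δ) i = (a : Vec n ν δ) i + 2*y :=
    fun B => B.2.choose_spec.2
  -- Step 1 : T ≃ S × units
  let g : S × (ZMod (2^n))ˣ → T := fun p =>
    ⟨((p.2 : ZMod (2^n)) • (rep p.1 : Vec n ν δ) : Vec n ν δ), by
      constructor
      · have h0 := (rep p.1).2.2
        simp only [Matrix.mulVec_smul, dotProduct_smul, smul_dotProduct, smul_eq_mul]
        rw [h0, mul_zero, mul_zero]
      · intro i
        obtain ⟨w, hw⟩ := unit_eq_one_add hn (p.2 : ZMod (2^n)) p.2.isUnit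
        obtain ⟨y, hy⟩ := hrep2 p.1 i
        refine ⟨y + w * (a : Vec n ν δ) i + 2*(w*y), ?_⟩
        show (p.2 : ZMod (2^n)) * (rep p.1 : Vec n ν δ) i = _
        rw [hy, hw]; ring⟩
  have hginj : Function.Injective g := by
    rintro ⟨B, u⟩ ⟨B', u'⟩ h
    have h1 : (u : ZMod (2^n)) • (rep B : Vec n ν δ) =
        (u' : ZMod (2^n)) • (rep B' : Vec n ν δ) := congrArg Subtype.val h
    have hBB' : B = B' := by
      apply Subtype.ext
      rw [← hrep1 B, ← hrep1 B']
      apply Quotient.sound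
      refine ⟨u⁻¹ * u', ?_⟩
      show (rep B : Vec n ν δ) = ((u⁻¹ * u' : (ZMod (2^n))ˣ) : ZMod (2^n)) • (rep B' : Vec n ν δ)
      funext i
      have h2 := congrFun h1 i
      simp only [Pi.smul_apply, smul_eq_mul] at h2 ⊢
      rw [Units.val_mul]
      calc (rep B : Vec n ν δ) i
          = (↑u⁻¹ : ZMod (2^n)) * ((u : ZMod (2^n)) * (rep B : Vec n ν δ) i) := by
            rw [← mul_assoc, Units.inv_mul, one_mul]
        _ = (↑u⁻¹ : ZMod (2^n)) * ((u' : ZMod (2^n)) * (rep B' : Vec n ν δ) i) := by rw [h2]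
        _ = (↑u⁻¹ : ZMod (2^n)) * (u' : ZMod (2^n)) * (rep B' : Vec n ν δ) i := by ring
    subst hBB'
    have hu1 : IsUnit ((rep B : Vec n ν δ) j) := hcong_unit _ (hrep2 B)
    have h2 : (u : ZMod (2^n)) * (rep B : Vec n ν δ) j =
        (u' : ZMod (2^n)) * (rep B : Vec n ν δ) j := by
      have h3 := congrFun h1 j
      simpa [smul_eq_mul] using h3
    have hone : (rep B : Vec n ν δ) j * ((hu1.unit⁻¹ : (ZMod (2^n))ˣ) : ZMod (2^n)) = 1 :=
      hu1.mul_val_inv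
    have h4 : (u : ZMod (2^n)) = (u' : ZMod (2^n)) := by
      have h5 := congrArg (fun x => x * ((hu1.unit⁻¹ : (ZMod (2^n))ˣ) : ZMod (2^n))) h2
      simp only [mul_assoc, hone, mul_one] at h5
      exact h5
    rw [Units.ext h4]
  have hgsurj : Function.Surjective g := by
    rintro ⟨b, hQb, hcb⟩
    have hbj : IsUnit (b j) := hcong_unit b hcb
    let bV : VertexRep n ν δ z := ⟨b, ⟨j, hbj⟩, hQb⟩
    let B : S := ⟨⟦bV⟧, bV, rfl, hcb⟩
    obtain ⟨u, hu⟩ := Quotient.exact (hrep1 B : (⟦rep B⟧ : Vertex n ν δ z) = ⟦bV⟧)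
    refine ⟨⟨B, u⁻¹⟩, ?_⟩
    apply Subtype.ext
    show ((u⁻¹ : (ZMod (2^n))ˣ) : ZMod (2^n)) • (rep B : Vec n ν δ) = b
    rw [hu, smul_smul, Units.inv_mul, one_smul]
  -- Step 2 : T ≃ product of cosets
  let P := ∀ i : {i : Fin (2*ν+δ) // i ≠ k}, {x : ZMod (2^n) // ∃ y, x = (a : Vec n ν δ) i.1 + 2*y}
  let F : T → P := fun b i => ⟨b.1 i.1, b.2.2 i.1⟩
  have hFinj : Function.Injective F := by
    rintro ⟨b, hQb, hcb⟩ ⟨b', hQb', hcb'⟩ h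
    have hoff : ∀ i, i ≠ k → b i = b' i := fun i hi =>
      congrArg Subtype.val (congrFun h ⟨i, hi⟩)
    apply Subtype.ext
    show b = b'
    have hupd : b = Function.update b' k (b k) := by
      funext i
      rcases eq_or_ne i k with rfl | hi
      · rw [Function.update_self]
      · rw [Function.update_of_ne hi]; exact hoff i hi
    have hq := Qdiff (z := z) hν j k hj hk b' (b k)
    rw [← hupd, hQb, hQb'] at hq
    have hbj' : IsUnit (b' j) := hcong_unit b' hcb'
    have h6 : b' j * (b k - b' k) = 0 := by linear_combination -hq
    have h7 : b k - b' k = 0 := by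
      have hone : ((hbj'.unit⁻¹ : (ZMod (2^n))ˣ) : ZMod (2^n)) * b' j = 1 :=
        hbj'.val_inv_mul
      calc b k - b' k = ((hbj'.unit⁻¹ : (ZMod (2^n))ˣ) : ZMod (2^n)) * (b' j * (b k - b' k)) := by
            rw [← mul_assoc, hone, one_mul]
        _ = 0 := by rw [h6, mul_zero]
    have h8 : b k = b' k := by linear_combination h7
    rw [hupd, h8, Function.update_eq_self]
  have hFsurj : Function.Surjective F := by
    intro f
    let c : Vec n ν δ := fun i => if h : i = k then (a : Vec n ν δ) k else (f ⟨i, h⟩).1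
    have hck : c k = (a : Vec n ν δ) k := by simp [c]
    have hcoff : ∀ i (h : i ≠ k), c i = (f ⟨i, h⟩).1 := fun i h => by simp [c, h]
    have hcc : ∀ i, ∃ y, c i = (a : Vec n ν δ) i + 2*y := by
      intro i
      rcases eq_or_ne i k with rfl | h
      · exact ⟨0, by rw [hck]; ring⟩
      · obtain ⟨y, hy⟩ := (f ⟨i, h⟩).2
        exact ⟨y, by rw [hcoff i h]; exact hy⟩
    let m : Vec n ν δ := fun i => (hcc i).choose
    have hm : c = (a : Vec n ν δ) + (2 : ZMod (2^n)) • m := by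
      funext i
      have := (hcc i).choose_spec
      simpa [Pi.smul_apply, smul_eq_mul] using this
    have hX : c ⬝ᵥ (Gmat n ν δ z).mulVec c =
        2 * (m ⬝ᵥ (Gmat n ν δ z).mulVec (a : Vec n ν δ)
          + (a : Vec n ν δ) ⬝ᵥ (Gmat n ν δ z).mulVec m
          + 2 * (m ⬝ᵥ (Gmat n ν δ z).mulVec m)) := by
      rw [hm, Qcong, hQa, zero_add]
    set X := m ⬝ᵥ (Gmat n ν δ z).mulVec (a : Vec n ν δ)
      + (a : Vec n ν δ) ⬝ᵥ (Gmat n ν δ z).mulVec m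
      + 2 * (m ⬝ᵥ (Gmat n ν δ z).mulVec m) with hXdef
    have hcj : IsUnit (c j) := hcong_unit c hcc
    have hone : c j * ((hcj.unit⁻¹ : (ZMod (2^n))ˣ) : ZMod (2^n)) = 1 :=
      hcj.mul_val_inv
    set w : ZMod (2^n) := ((hcj.unit⁻¹ : (ZMod (2^n))ˣ) : ZMod (2^n)) with hwdef
    let t : ZMod (2^n) := c k - w * (c ⬝ᵥ (Gmat n ν δ z).mulVec c)
    let b := Function.update c k t
    have hQb : b ⬝ᵥ (Gmat n ν δ z).mulVec b = 0 := by
      have hq := Qdiff (z := z) hν j k hj hk c t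
      rw [show (b : Vec n ν δ) = Function.update c k t from rfl, hq]
      have ht : t - c k = -(w * (c ⬝ᵥ (Gmat n ν δ z).mulVec c)) := by
        show c k - w * (c ⬝ᵥ (Gmat n ν δ z).mulVec c) - c k = _
        ring
      rw [ht]
      calc c ⬝ᵥ (Gmat n ν δ z).mulVec c + c j * -(w * (c ⬝ᵥ (Gmat n ν δ z).mulVec c))
          = c ⬝ᵥ (Gmat n ν δ z).mulVec c - (c j * w) * (c ⬝ᵥ (Gmat n ν δ z).mulVec c) := by ring
        _ = 0 := by rw [hone, one_mul, sub_self]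
    have hcbb : ∀ i, ∃ y, b i = (a : Vec n ν δ) i + 2*y := by
      intro i
      rcases eq_or_ne i k with rfl | h
      · refine ⟨-(w * X), ?_⟩
        show Function.update c k t k = _
        rw [Function.update_self]
        show c k - w * (c ⬝ᵥ (Gmat n ν δ z).mulVec c) = _
        rw [hck, hX]
        ring
      · have : b i = c i := Function.update_of_ne h _ _
        rw [this]
        exact hcc i
    refine ⟨⟨b, hQb, hcbb⟩, ?_⟩
    funext i
    apply Subtype.ext
    show b i.1 = (f i).1
    have h1 : b i.1 = c i.1 := Function.update_of_ne i.2 _ _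
    rw [h1, hcoff i.1 i.2]
  -- cardinalities
  have e1 : T ≃ S × (ZMod (2^n))ˣ := (Equiv.ofBijective g ⟨hginj, hgsurj⟩).symm
  have e2 : T ≃ P := Equiv.ofBijective F ⟨hFinj, hFsurj⟩
  have hc1 : Nat.card T = Nat.card S * Nat.card (ZMod (2^n))ˣ := by
    rw [Nat.card_congr e1, Nat.card_prod]
  have hcardsub : Fintype.card {i : Fin (2*ν+δ) // i ≠ k} = 2*ν+δ-1 := by
    simp only [ne_eq]
    rw [Fintype.card_subtype_compl, Fintype.card_subtype_eq, Fintype.card_fin]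
  have hc2 : Nat.card T = (2^(n-1))^(2*ν+δ-1) := by
    rw [Nat.card_congr e2]
    show Nat.card (∀ i : {i : Fin (2*ν+δ) // i ≠ k},
        {x : ZMod (2^n) // ∃ y, x = (a : Vec n ν δ) i.1 + 2*y}) = _
    rw [Nat.card_pi]
    rw [Finset.prod_congr rfl (fun i _ => card_coset hn ((a : Vec n ν δ) i.1)), Finset.prod_const]
    rw [Finset.card_univ, hcardsub]
  have hunits : Nat.card (ZMod (2^n))ˣ = 2^(n-1) := by
    rw [Nat.card_eq_fintype_card, ZMod.card_units_eq_totient,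
      Nat.totient_prime_pow Nat.prime_two hn]
    simp
  have hkey : Nat.card S * 2^(n-1) = (2^(n-1))^(2*ν+δ-2) * 2^(n-1) := by
    have hexp : 2*ν+δ-1 = (2*ν+δ-2)+1 := by omega
    calc Nat.card S * 2^(n-1) = Nat.card S * Nat.card (ZMod (2^n))ˣ := by rw [hunits]
      _ = Nat.card T := hc1.symm
      _ = (2^(n-1))^(2*ν+δ-1) := hc2
      _ = (2^(n-1))^(2*ν+δ-2) * 2^(n-1) := by rw [hexp, pow_succ]
  have hS : Nat.card S = (2^(n-1))^(2*ν+δ-2) :=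
    Nat.eq_of_mul_eq_mul_right (Nat.pow_pos (by norm_num)) hkey
  rw [hS, ← pow_mul]


end Ortho
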